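/- Let u = so(3) ⊕ so(n+1) (n ≥ 3) with an Ad-invariant inner product making the elementary skew matrices E_{ab} orthonormal in each factor, k = so(2) ⊕ so(n) embedded in the lower-right blocks, p its orthogonal complement, and a = span{H₂, H₁} where H₂ = (E_{12}, 0) and H₁ = (0, E_{12}). Suppose v₁ ∈ a and v₂ ∈ p are unit vectors such that [v₁, v₂] lies in the center c(k) = so(2) ⊕ {0} of k. Then ‖[v₁, v₂]‖² ≤ 1, with equality if and only if v₁ = ±H₂ and v₂ = ±(E_{13}, 0). -/

import Mathlib

open Matrix

/-- The elementary skew-symmetric matrix `E_{ab}` with `+1` in entry `(a,b)` and `-1`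
in entry `(b,a)`. -/
noncomputable def Eskew {k : ℕ} (a b : Fin k) : Matrix (Fin k) (Fin k) ℝ :=
  Matrix.single a b 1 - Matrix.single b a 1

/-- The inner product on `so(3) ⊕ so(n+1)` for which the elementary skew matrices are
orthonormal in each factor. -/
noncomputable def ipn (n : ℕ)
    (X Y : Matrix (Fin 3) (Fin 3) ℝ × Matrix (Fin (n + 1)) (Fin (n + 1)) ℝ) : ℝ :=
  (1 / 2) * ((X.1ᵀ * Y.1).trace + (X.2ᵀ * Y.2).trace)

/-- The componentwise matrix commutator on `so(3) ⊕ so(n+1)`. -/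
def brktn (n : ℕ)
    (X Y : Matrix (Fin 3) (Fin 3) ℝ × Matrix (Fin (n + 1)) (Fin (n + 1)) ℝ) :
    Matrix (Fin 3) (Fin 3) ℝ × Matrix (Fin (n + 1)) (Fin (n + 1)) ℝ :=
  (X.1 * Y.1 - Y.1 * X.1, X.2 * Y.2 - Y.2 * X.2)

lemma brk1 (x x' y' : ℝ) :
    (x • Eskew 0 1 : Matrix (Fin 3) (Fin 3) ℝ) * (x' • Eskew 0 1 + y' • Eskew 0 2)
      - (x' • Eskew 0 1 + y' • Eskew 0 2) * (x • Eskew 0 1)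
      = (-(x * y')) • Eskew 1 2 := by
  ext i j
  fin_cases i <;> fin_cases j <;>
    simp [Eskew, Matrix.mul_apply, Matrix.single, Fin.sum_univ_three,
      Matrix.sub_apply, Matrix.add_apply, Matrix.smul_apply] <;> ring

lemma ipnval (n : ℕ) (c : ℝ) :
    ipn n (c • Eskew 1 2, 0) (c • Eskew 1 2, 0) = c ^ 2 := by
  simp [ipn, Matrix.trace, Matrix.mul_apply, Matrix.transpose_apply, Fin.sum_univ_three,
    Eskew, Matrix.single]
  ring

set_option maxHeartbeats 1000000 in
/-- for the symmetric pair `(SO(3)×SO(n+1), SO(2)×SO(n))` with `n ≥ 3`,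
if `v₁ = x•H₂ + y•H₁ ∈ a` (with `H₂ = (E₁₂,0)`, `H₁ = (0,E₁₂)`) and `v₂ ∈ p` are unit
vectors with `[v₁,v₂]` in the center `c(k) = so(2) ⊕ {0}` (spanned by `(E₂₃,0)`), then
`‖[v₁,v₂]‖² ≤ 1` with equality iff `v₁ = ±H₂` and `v₂ = ±(E₁₃,0)`. -/
theorem stmt6 (n : ℕ) (hn : 3 ≤ n) (x y x' y' : ℝ) (X : Fin n → ℝ)
    (hv₁unit : x ^ 2 + y ^ 2 = 1)
    (hv₂unit : x' ^ 2 + y' ^ 2 + ∑ j : Fin n, (X j) ^ 2 = 1)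
    (v₁ v₂ : Matrix (Fin 3) (Fin 3) ℝ × Matrix (Fin (n + 1)) (Fin (n + 1)) ℝ)
    (hv₁def : v₁ = (x • Eskew 0 1, y • Eskew 0 1))
    (hv₂def : v₂ = (x' • Eskew 0 1 + y' • Eskew 0 2,
      ∑ j : Fin n, X j • Eskew (0 : Fin (n + 1)) j.succ))
    (hcenter : ∃ c : ℝ, brktn n v₁ v₂ = (c • Eskew 1 2, 0)) :
    ipn n (brktn n v₁ v₂) (brktn n v₁ v₂) ≤ 1 ∧
    (ipn n (brktn n v₁ v₂) (brktn n v₁ v₂) = 1 ↔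
      (v₁ = (Eskew 0 1, 0) ∨ v₁ = (-(Eskew 0 1), 0)) ∧
      (v₂ = (Eskew 0 2, 0) ∨ v₂ = (-(Eskew 0 2), 0))) := by
  subst hv₁def; subst hv₂def
  obtain ⟨c, hc⟩ := hcenter
  have h1 : (x • Eskew 0 1 : Matrix (Fin 3) (Fin 3) ℝ) * (x' • Eskew 0 1 + y' • Eskew 0 2)
      - (x' • Eskew 0 1 + y' • Eskew 0 2) * (x • Eskew 0 1) = c • Eskew 1 2 :=
    congrArg Prod.fst hc
  rw [brk1] at h1
  have hcval : -(x * y') = c := by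
    have h2 := congrFun (congrFun h1 1) 2
    simpa [Eskew, Matrix.single, Matrix.smul_apply] using h2
  rw [hc, ipnval]
  have hS : (0:ℝ) ≤ ∑ j : Fin n, (X j) ^ 2 := Finset.sum_nonneg fun j _ => sq_nonneg _
  have hy'le : y' ^ 2 ≤ 1 := by nlinarith [sq_nonneg x']
  have hxle : x ^ 2 ≤ 1 := by nlinarith [sq_nonneg y]
  have hcv : c ^ 2 = x ^ 2 * y' ^ 2 := by rw [← hcval]; ring
  constructor
  · nlinarith [mul_nonneg (sq_nonneg x) (sub_nonneg.mpr hy'le)]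
  constructor
  · intro heq
    have hx2 : x ^ 2 = 1 := by
      nlinarith [mul_nonneg (sq_nonneg x) (sub_nonneg.mpr hy'le)]
    have hy'2 : y' ^ 2 = 1 := by
      nlinarith [mul_nonneg (sq_nonneg y') (sub_nonneg.mpr hxle)]
    have hy : y = 0 := by
      have : y ^ 2 = 0 := by linarith
      exact pow_eq_zero_iff (by norm_num) |>.mp this
    have hx' : x' = 0 := by
      have : x' ^ 2 = 0 := by nlinarith
      exact pow_eq_zero_iff (by norm_num) |>.mp this
    have hSz : ∑ j : Fin n, (X j) ^ 2 = 0 := by nlinarith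
    have hXj : ∀ j : Fin n, X j = 0 := by
      intro j
      have := (Finset.sum_eq_zero_iff_of_nonneg (fun j _ => sq_nonneg (X j))).mp hSz j
        (Finset.mem_univ j)
      exact pow_eq_zero_iff (by norm_num) |>.mp this
    have hsum : (∑ j : Fin n, X j • Eskew (0 : Fin (n + 1)) j.succ) = 0 :=
      Finset.sum_eq_zero fun j _ => by rw [hXj j, zero_smul]
    constructor
    · rcases mul_self_eq_one_iff.mp (by nlinarith : x * x = 1) with hx1 | hx1
      · left; rw [hx1, hy]; simp
      · right; rw [hx1, hy]; simp
    · rcases mul_self_eq_one_iff.mp (by nlinarith : y' * y' = 1) with hy1 | hy1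
      · left; rw [hy1, hx', hsum]; simp
      · right; rw [hy1, hx', hsum]; simp
  · rintro ⟨h1' | h1', h2' | h2'⟩ <;>
    · have ha := congrArg Prod.fst h1'
      have hb := congrArg Prod.fst h2'
      have hxv : x = 1 ∨ x = -1 := by
        have := congrFun (congrFun ha 0) 1
        simp [Eskew, Matrix.single, Matrix.smul_apply] at this
        tauto
      have hy'v : y' = 1 ∨ y' = -1 := by
        have := congrFun (congrFun hb 0) 2
        simp [Eskew, Matrix.single, Matrix.smul_apply, Matrix.add_apply] at this
        tauto
      rw [hcv]
      rcases hxv with h | h <;> rcases hy'v with h' | h' <;> rw [h, h'] <;> norm_num
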